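/- arXiv:2503.14366 — 2 statements merged into one kernel-verified Lean document; each statement's English description precedes it below -/
import Mathlib

section
/- Let E : ℝ → ℝ be twice differentiable on (θ−h₀, θ+h₀) with |E''| ≤ μ there, and suppose the noisy evaluations satisfy Ē(x) = E(x) + ε(x), where ε(θ+h) and ε(θ) are independent zero-mean random variables each of variance at most ς²/N. Then for 0 < h < h₀, the mean-squared error of the forward finite-difference gradient estimate satisfies E[((Ē(θ+h) − Ē(θ))/h − E'(θ))²] ≤ (1/4)μ²h² + 2ς²/(h²N). -/
open MeasureTheory ProbabilityTheory Set

/-- Second-order Taylor bias bound for the forward difference. -/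
lemma bias_bound (θ h₀ μ : ℝ) (E E' E'' : ℝ → ℝ)
    (hE' : ∀ x ∈ Ioo (θ - h₀) (θ + h₀), HasDerivAt E (E' x) x)
    (hE'' : ∀ x ∈ Ioo (θ - h₀) (θ + h₀), HasDerivAt E' (E'' x) x)
    (hbound : ∀ x ∈ Ioo (θ - h₀) (θ + h₀), |E'' x| ≤ μ)
    (h : ℝ) (hh : 0 < h) (hh₀ : 0 < h₀) (hhlt : h < h₀) :
    |(E (θ + h) - E θ) / h - E' θ| ≤ μ * h / 2 := by
  have hsub : ∀ x ∈ Icc θ (θ + h), x ∈ Ioo (θ - h₀) (θ + h₀) := by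
    intro x hx
    exact ⟨by linarith [hx.1], by linarith [hx.2]⟩
  set B : ℝ := (E (θ + h) - E θ - h * E' θ) / h ^ 2 with hB
  set F : ℝ → ℝ := fun x => E x - E' θ * x - B * (x - θ) ^ 2 with hF
  set F' : ℝ → ℝ := fun x => E' x - E' θ - 2 * B * (x - θ) with hF'
  have hne : h ≠ 0 := ne_of_gt hh
  have hFderiv : ∀ x ∈ Icc θ (θ + h), HasDerivAt F (F' x) x := by
    intro x hx
    have h1 := hE' x (hsub x hx)
    have h2 : HasDerivAt (fun x : ℝ => E' θ * x) (E' θ) x := by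
      simpa using (hasDerivAt_id x).const_mul (E' θ)
    have h3 : HasDerivAt (fun x : ℝ => B * (x - θ) ^ 2) (2 * B * (x - θ)) x := by
      have : HasDerivAt (fun x : ℝ => (x - θ) ^ 2) (2 * (x - θ)) x := by
        simpa using (((hasDerivAt_id x).sub_const θ).fun_pow 2)
      have := this.const_mul B
      rw [show 2 * B * (x - θ) = B * (2 * (x - θ)) by ring]
      exact this
    simpa [hF, hF'] using (h1.fun_sub h2).fun_sub h3
  have hFc : ContinuousOn F (Icc θ (θ + h)) := fun x hx =>
    (hFderiv x hx).continuousAt.continuousWithinAt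
  have hab : θ < θ + h := by linarith
  have hFI : F θ = F (θ + h) := by
    simp only [hF, hB]
    field_simp
    ring
  obtain ⟨ξ, hξ, hξ0⟩ := exists_hasDerivAt_eq_zero hab hFc hFI
    (fun x hx => hFderiv x (Ioo_subset_Icc_self hx))
  -- MVT for E' on [θ, ξ]
  have hθξ : θ < ξ := hξ.1
  have hsub2 : ∀ x ∈ Icc θ ξ, x ∈ Ioo (θ - h₀) (θ + h₀) := fun x hx =>
    hsub x ⟨hx.1, le_trans hx.2 (le_of_lt hξ.2)⟩
  have hE'c : ContinuousOn E' (Icc θ ξ) := fun x hx =>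
    (hE'' x (hsub2 x hx)).continuousAt.continuousWithinAt
  obtain ⟨η, hη, hη0⟩ := exists_hasDerivAt_eq_slope E' E'' hθξ hE'c
    (fun x hx => hE'' x (hsub2 x (Ioo_subset_Icc_self hx)))
  -- From Rolle: E' ξ - E' θ = 2 * B * (ξ - θ)
  have hrolle : E' ξ - E' θ = 2 * B * (ξ - θ) := by
    have := hξ0
    simp only [hF'] at this
    linarith
  have hξθ : ξ - θ ≠ 0 := sub_ne_zero.mpr (ne_of_gt hθξ)
  have h2B : E'' η = 2 * B := by
    rw [hη0, hrolle]
    field_simp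
  have hηmem : η ∈ Ioo (θ - h₀) (θ + h₀) := hsub2 η ⟨le_of_lt hη.1, le_of_lt hη.2⟩
  have hBμ : |B| ≤ μ / 2 := by
    have := hbound η hηmem
    rw [h2B, abs_mul, abs_two] at this
    linarith [abs_nonneg B]
  have hbias : (E (θ + h) - E θ) / h - E' θ = B * h := by
    simp only [hB]
    field_simp
  rw [hbias, abs_mul, abs_of_pos hh]
  calc |B| * h ≤ (μ / 2) * h := by
        exact mul_le_mul_of_nonneg_right hBμ (le_of_lt hh)
    _ = μ * h / 2 := by ring

/-- Statement (1) of Theorem 1 (QuGStep): mean-squared error bound for the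
noisy forward finite-difference gradient estimate. -/
theorem stmt_5 {Ω : Type*} [MeasurableSpace Ω] (P : Measure Ω) [IsProbabilityMeasure P]
    (θ h₀ μ ς : ℝ) (hh₀ : 0 < h₀) (hμ : 0 < μ) (hς : 0 < ς) (N : ℕ) (hN : 0 < N)
    (E E' E'' : ℝ → ℝ)
    (hE' : ∀ x ∈ Ioo (θ - h₀) (θ + h₀), HasDerivAt E (E' x) x)
    (hE'' : ∀ x ∈ Ioo (θ - h₀) (θ + h₀), HasDerivAt E' (E'' x) x)
    (hbound : ∀ x ∈ Ioo (θ - h₀) (θ + h₀), |E'' x| ≤ μ)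
    (h : ℝ) (hh : 0 < h) (hhlt : h < h₀)
    (ε₁ ε₂ : Ω → ℝ) (hm₁ : MemLp ε₁ 2 P) (hm₂ : MemLp ε₂ 2 P)
    (hind : IndepFun ε₁ ε₂ P)
    (hmean₁ : ∫ ω, ε₁ ω ∂P = 0) (hmean₂ : ∫ ω, ε₂ ω ∂P = 0)
    (hvar₁ : variance ε₁ P ≤ ς ^ 2 / N) (hvar₂ : variance ε₂ P ≤ ς ^ 2 / N) :
    ∫ ω, (((E (θ + h) + ε₁ ω) - (E θ + ε₂ ω)) / h - E' θ) ^ 2 ∂P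
      ≤ (1 / 4) * μ ^ 2 * h ^ 2 + 2 * ς ^ 2 / (h ^ 2 * N) := by
  have hne : h ≠ 0 := ne_of_gt hh
  set b : ℝ := (E (θ + h) - E θ) / h - E' θ with hbdef
  set X : Ω → ℝ := fun ω => ε₁ ω - ε₂ ω with hXdef
  have hmX : MemLp X 2 P := hm₁.sub hm₂
  have hXint : Integrable X P := hmX.integrable one_le_two
  have hX2int : Integrable (fun ω => X ω ^ 2) P := hmX.integrable_sq
  have hXmean : ∫ ω, X ω ∂P = 0 := by
    rw [hXdef]
    rw [integral_sub (hm₁.integrable one_le_two) (hm₂.integrable one_le_two), hmean₁, hmean₂]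
    ring
  -- variance of X
  have hvarX : variance X P ≤ 2 * ς ^ 2 / N := by
    have hneg : MemLp (fun ω => -ε₂ ω) 2 P := hm₂.neg
    have hindX : IndepFun ε₁ (fun ω => -ε₂ ω) P := hind.neg_right
    have hadd := IndepFun.variance_add hm₁ hneg hindX
    have hXeq : X = ε₁ + (fun ω => -ε₂ ω) := by
      funext ω; simp [hXdef, sub_eq_add_neg]
    have hvneg : variance (fun ω => -ε₂ ω) P = variance ε₂ P := by
      have := variance_const_mul (-1 : ℝ) ε₂ P
      simpa using this
    rw [hXeq, hadd, hvneg]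
    have : ς ^ 2 / N + ς ^ 2 / N = 2 * ς ^ 2 / N := by ring
    linarith
  -- second moment of X
  have hX2 : ∫ ω, X ω ^ 2 ∂P ≤ 2 * ς ^ 2 / N := by
    have := variance_eq_sub hmX
    simp only [Pi.pow_apply] at this
    have h2 : ∫ ω, X ω ^ 2 ∂P = variance X P + (∫ ω, X ω ∂P) ^ 2 := by
      rw [this]; ring
    rw [h2, hXmean]
    simpa using hvarX
  -- rewrite the integrand
  have heq : ∀ ω, (((E (θ + h) + ε₁ ω) - (E θ + ε₂ ω)) / h - E' θ) ^ 2
      = b ^ 2 + (2 * b / h) * X ω + (1 / h ^ 2) * X ω ^ 2 := by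
    intro ω
    simp only [hbdef, hXdef]
    field_simp
    ring
  rw [integral_congr_ae (Filter.Eventually.of_forall heq)]
  have hint1 : Integrable (fun _ : Ω => b ^ 2) P := integrable_const _
  have hint2 : Integrable (fun ω => (2 * b / h) * X ω) P := hXint.const_mul _
  have hint3 : Integrable (fun ω => (1 / h ^ 2) * X ω ^ 2) P := hX2int.const_mul _
  have hsplit1 : ∫ ω, (b ^ 2 + (2 * b / h) * X ω + (1 / h ^ 2) * X ω ^ 2) ∂P
      = (∫ ω, (b ^ 2 + (2 * b / h) * X ω) ∂P) + ∫ ω, (1 / h ^ 2) * X ω ^ 2 ∂P :=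
    integral_add (hint1.add hint2) hint3
  have hsplit2 : ∫ ω, (b ^ 2 + (2 * b / h) * X ω) ∂P
      = (∫ _ω, b ^ 2 ∂P) + ∫ ω, (2 * b / h) * X ω ∂P :=
    integral_add hint1 hint2
  rw [hsplit1, hsplit2, integral_const, integral_const_mul, integral_const_mul, hXmean]
  simp only [probReal_univ, measure_univ, ENNReal.toReal_one, smul_eq_mul, one_mul, mul_zero, add_zero]
  -- bias bound
  have hbias := bias_bound θ h₀ μ E E' E'' hE' hE'' hbound h hh hh₀ hhlt
  have hb2 : b ^ 2 ≤ (1 / 4) * μ ^ 2 * h ^ 2 := by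
    have := sq_le_sq' (neg_le_of_abs_le hbias) (le_of_abs_le hbias)
    calc b ^ 2 ≤ (μ * h / 2) ^ 2 := this
      _ = (1 / 4) * μ ^ 2 * h ^ 2 := by ring
  have hvterm : (1 / h ^ 2) * ∫ ω, X ω ^ 2 ∂P ≤ 2 * ς ^ 2 / (h ^ 2 * N) := by
    have hpos : (0 : ℝ) < 1 / h ^ 2 := by positivity
    calc (1 / h ^ 2) * ∫ ω, X ω ^ 2 ∂P ≤ (1 / h ^ 2) * (2 * ς ^ 2 / N) :=
          mul_le_mul_of_nonneg_left hX2 (le_of_lt hpos)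
      _ = 2 * ς ^ 2 / (h ^ 2 * N) := by
          field_simp
  linarith
end

section
/- Let E : ℝ → ℝ be twice differentiable with |E''| ≤ μ globally, and suppose for each evaluation point the noise is an independent zero-mean random variable with variance at most ς²/N. Then for every h > 0 the root-mean-squared error of the forward-difference gradient estimate is at most √((1/4)μ²h² + 2ς²/(h²N)), and choosing h = h_N = 8^(1/4)ς^(1/2)μ^(−1/2)N^(−1/4) makes this RMSE at most (2)^(1/4)·√(μς)·N^(−1/4). -/
open MeasureTheory ProbabilityTheory

lemma taylor_bias (μ : ℝ) (hμ : 0 < μ) (E E' E'' : ℝ → ℝ)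
    (hE' : ∀ x : ℝ, HasDerivAt E (E' x) x)
    (hE'' : ∀ x : ℝ, HasDerivAt E' (E'' x) x)
    (hbound : ∀ x : ℝ, |E'' x| ≤ μ) (θ h : ℝ) (hh : 0 < h) :
    |(E (θ + h) - E θ) / h - E' θ| ≤ μ * h / 2 := by
  have hE'lip : ∀ x y : ℝ, |E' y - E' x| ≤ μ * |y - x| := by
    intro x y
    have := Convex.norm_image_sub_le_of_norm_hasDerivWithin_le
      (f := E') (f' := E'') (s := Set.univ) (C := μ)
      (fun z _ => (hE'' z).hasDerivWithinAt)
      (fun z _ => by simpa using hbound z) convex_univ (Set.mem_univ x) (Set.mem_univ y)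
    simpa [Real.norm_eq_abs] using this
  have hcont : Continuous E' := by
    rw [continuous_iff_continuousAt]
    exact fun x => (hE'' x).differentiableAt.continuousAt
  set g : ℝ → ℝ := fun t => E (θ + t) - E θ - t * E' θ with hg
  have hgderiv : ∀ t ∈ Set.uIcc (0:ℝ) h, HasDerivAt g (E' (θ + t) - E' θ) t := by
    intro t _
    have h1 : HasDerivAt (fun t => E (θ + t)) (E' (θ + t)) t := by
      have := (hE' (θ + t)).comp t ((hasDerivAt_id t).const_add θ); rw [mul_one] at this; exact this
    have := (h1.sub_const (E θ)).sub ((hasDerivAt_id t).mul_const (E' θ)); rw [one_mul] at this; exact this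
  have hginteg : IntervalIntegrable (fun t => E' (θ + t) - E' θ) MeasureTheory.volume 0 h :=
    (Continuous.sub (hcont.comp (continuous_const.add continuous_id)) continuous_const).intervalIntegrable _ _
  have hfund : ∫ t in (0:ℝ)..h, (E' (θ + t) - E' θ) = g h - g 0 :=
    intervalIntegral.integral_eq_sub_of_hasDerivAt hgderiv hginteg
  have hg0 : g 0 = 0 := by simp [hg]
  have hbnd := intervalIntegral.norm_integral_le_of_norm_le
      (μ := MeasureTheory.volume) (f := fun t => E' (θ + t) - E' θ) (g := fun t => μ * t)
      (a := 0) (b := h) hh.le ?_ ?_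
  · have hint : ∫ t in (0:ℝ)..h, μ * t = μ * (h ^ 2 / 2) := by
      rw [intervalIntegral.integral_const_mul, integral_id]; ring
    rw [hint, Real.norm_eq_abs] at hbnd
    have hgh : |g h| ≤ μ * h ^ 2 / 2 := by
      rw [← sub_zero (g h), ← hg0, ← hfund]
      linarith
    have heq : (E (θ + h) - E θ) / h - E' θ = g h / h := by
      field_simp [hg]; rfl
    rw [heq, abs_div, abs_of_pos hh, div_le_iff₀ hh]
    nlinarith
  · filter_upwards with t ht
    have h2 := hE'lip θ (θ + t)
    simp only [add_sub_cancel_left] at h2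
    rw [Real.norm_eq_abs]
    calc |E' (θ + t) - E' θ| ≤ μ * |t| := h2
      _ = μ * t := by rw [abs_of_nonneg ht.1.le]
  · exact (continuous_const.mul continuous_id).intervalIntegrable _ _

lemma noise_part {Ω : Type*} [MeasurableSpace Ω] (P : Measure Ω) [IsProbabilityMeasure P]
    (X Y : Ω → ℝ) (hX : MemLp X 2 P) (hY : MemLp Y 2 P)
    (hXm : ∫ ω, X ω ∂P = 0) (hYm : ∫ ω, Y ω ∂P = 0)
    (hXY : IndepFun X Y P) (b h : ℝ) (hh : h ≠ 0) :
    ∫ ω, (b + (X ω - Y ω) / h) ^ 2 ∂P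
      = b ^ 2 + ((∫ ω, X ω ^ 2 ∂P) + ∫ ω, Y ω ^ 2 ∂P) / h ^ 2 := by
  have hXi : Integrable X P := hX.integrable one_le_two
  have hYi : Integrable Y P := hY.integrable one_le_two
  have hX2 : Integrable (fun ω => X ω ^ 2) P := hX.integrable_sq
  have hY2 : Integrable (fun ω => Y ω ^ 2) P := hY.integrable_sq
  have hXYi : Integrable (fun ω => X ω * Y ω) P := hXY.integrable_mul hXi hYi
  have hintXY : ∫ ω, X ω * Y ω ∂P = 0 := by
    have h1 := hXY.integral_mul_eq_mul_integral hXi.1 hYi.1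
    have h2 : ∫ ω, X ω * Y ω ∂P = ∫ ω, (X * Y) ω ∂P := rfl
    rw [h2]
    rw [show ∫ ω, (X * Y) ω ∂P = integral P (X * Y) from rfl, h1, hXm, hYm, mul_zero]
  have i5 : Integrable (fun ω => (-(2/h^2)) * (X ω * Y ω) + (1/h^2) * Y ω ^ 2) P :=
    (hXYi.const_mul _).add (hY2.const_mul _)
  have i4 : Integrable (fun ω => (1/h^2) * X ω ^ 2
      + ((-(2/h^2)) * (X ω * Y ω) + (1/h^2) * Y ω ^ 2)) P := (hX2.const_mul _).add i5
  have i3 : Integrable (fun ω => (-(2*b/h)) * Y ω + ((1/h^2) * X ω ^ 2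
      + ((-(2/h^2)) * (X ω * Y ω) + (1/h^2) * Y ω ^ 2))) P := (hYi.const_mul _).add i4
  have i2 : Integrable (fun ω => (2*b/h) * X ω + ((-(2*b/h)) * Y ω + ((1/h^2) * X ω ^ 2
      + ((-(2/h^2)) * (X ω * Y ω) + (1/h^2) * Y ω ^ 2)))) P := (hXi.const_mul _).add i3
  have expand : (fun ω => (b + (X ω - Y ω) / h) ^ 2)
      = fun ω => b ^ 2 + ((2*b/h) * X ω + ((-(2*b/h)) * Y ω + ((1/h^2) * X ω ^ 2
        + ((-(2/h^2)) * (X ω * Y ω) + (1/h^2) * Y ω ^ 2)))) := by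
    funext ω; field_simp; ring
  rw [expand, integral_add (integrable_const _) i2,
    integral_add (hXi.const_mul _) i3,
    integral_add (hYi.const_mul _) i4,
    integral_add (hX2.const_mul _) i5,
    integral_add (hXYi.const_mul _) (hY2.const_mul _),
    integral_const_mul, integral_const_mul, integral_const_mul, integral_const_mul,
    integral_const_mul, hXm, hYm, hintXY, integral_const]
  simp only [measure_univ, probReal_univ, ENNReal.toReal_one, smul_eq_mul, one_mul, mul_zero]
  field_simp
  ring

/-- RMSE bound for the noisy forward-difference gradient estimate, and its
value at the optimal step size `h_N = 8^(1/4)ς^(1/2)μ^(−1/2)N^(−1/4)`. -/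
theorem stmt_18 {Ω : Type*} [MeasurableSpace Ω] (P : Measure Ω) [IsProbabilityMeasure P]
    (μ ς : ℝ) (hμ : 0 < μ) (hς : 0 < ς) (N : ℕ) (hN : 0 < N)
    (E E' E'' : ℝ → ℝ)
    (hE' : ∀ x : ℝ, HasDerivAt E (E' x) x)
    (hE'' : ∀ x : ℝ, HasDerivAt E' (E'' x) x)
    (hbound : ∀ x : ℝ, |E'' x| ≤ μ)
    (ε : ℝ → Ω → ℝ)
    (hmem : ∀ x : ℝ, MemLp (ε x) 2 P)
    (hmean : ∀ x : ℝ, ∫ ω, ε x ω ∂P = 0)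
    (hvar : ∀ x : ℝ, variance (ε x) P ≤ ς ^ 2 / N)
    (hind : ∀ x y : ℝ, x ≠ y → IndepFun (ε x) (ε y) P)
    (θ : ℝ) :
    (∀ h : ℝ, 0 < h →
      Real.sqrt (∫ ω,
          (((E (θ + h) + ε (θ + h) ω) - (E θ + ε θ ω)) / h - E' θ) ^ 2 ∂P)
        ≤ Real.sqrt ((1 / 4) * μ ^ 2 * h ^ 2 + 2 * ς ^ 2 / (h ^ 2 * N))) ∧
    (∀ h : ℝ, h = (8 : ℝ) ^ ((1 : ℝ) / 4) * ς ^ ((1 : ℝ) / 2)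
        * μ ^ (-(1 : ℝ) / 2) * (N : ℝ) ^ (-(1 : ℝ) / 4) →
      Real.sqrt (∫ ω,
          (((E (θ + h) + ε (θ + h) ω) - (E θ + ε θ ω)) / h - E' θ) ^ 2 ∂P)
        ≤ (2 : ℝ) ^ ((1 : ℝ) / 4) * Real.sqrt (μ * ς) * (N : ℝ) ^ (-(1 : ℝ) / 4)) := by
  have hN' : (0:ℝ) < N := by exact_mod_cast hN
  have partA : ∀ h : ℝ, 0 < h →
      Real.sqrt (∫ ω,
          (((E (θ + h) + ε (θ + h) ω) - (E θ + ε θ ω)) / h - E' θ) ^ 2 ∂P)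
        ≤ Real.sqrt ((1 / 4) * μ ^ 2 * h ^ 2 + 2 * ς ^ 2 / (h ^ 2 * N)) := by
    intro h hh
    set X := ε (θ + h) with hX
    set Y := ε θ with hY
    set b := (E (θ + h) - E θ) / h - E' θ with hb
    have hne : θ + h ≠ θ := by intro he; nlinarith [he]
    have hXY : IndepFun X Y P := hind _ _ hne
    have hrw : (fun ω => (((E (θ + h) + X ω) - (E θ + Y ω)) / h - E' θ) ^ 2)
        = fun ω => (b + (X ω - Y ω) / h) ^ 2 := by
      funext ω; rw [hb]; field_simp; ring
    have key := noise_part P X Y (hmem _) (hmem _) (hmean _) (hmean _) hXY b h hh.ne'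
    have hvX : ∫ ω, X ω ^ 2 ∂P ≤ ς ^ 2 / N := by
      have := variance_of_integral_eq_zero (hmem (θ + h)).aestronglyMeasurable.aemeasurable (hmean _)
      calc ∫ ω, X ω ^ 2 ∂P = variance X P := by rw [this]
        _ ≤ ς ^ 2 / N := hvar _
    have hvY : ∫ ω, Y ω ^ 2 ∂P ≤ ς ^ 2 / N := by
      have := variance_of_integral_eq_zero (hmem θ).aestronglyMeasurable.aemeasurable (hmean _)
      calc ∫ ω, Y ω ^ 2 ∂P = variance Y P := by rw [this]
        _ ≤ ς ^ 2 / N := hvar _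
    have hbias := taylor_bias μ hμ E E' E'' hE' hE'' hbound θ h hh
    rw [← hb] at hbias
    rw [hrw] at *
    apply Real.sqrt_le_sqrt
    rw [key]
    have hb2 : b ^ 2 ≤ (1/4) * μ ^ 2 * h ^ 2 := by
      have h1 : b * b ≤ (μ * h / 2) * (μ * h / 2) := by
        rw [← abs_mul_abs_self b]
        exact mul_self_le_mul_self (abs_nonneg b) hbias
      nlinarith [h1]
    have hvar2 : ((∫ ω, X ω ^ 2 ∂P) + ∫ ω, Y ω ^ 2 ∂P) / h ^ 2 ≤ 2 * ς ^ 2 / (h ^ 2 * N) := by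
      rw [div_le_div_iff₀ (by positivity) (by positivity)]
      have h1 : (∫ ω, X ω ^ 2 ∂P) + ∫ ω, Y ω ^ 2 ∂P ≤ 2 * (ς ^ 2 / N) := by linarith
      calc ((∫ ω, X ω ^ 2 ∂P) + ∫ ω, Y ω ^ 2 ∂P) * (h ^ 2 * N)
          ≤ 2 * (ς ^ 2 / N) * (h ^ 2 * N) := by
            exact mul_le_mul_of_nonneg_right h1 (by positivity)
        _ = 2 * ς ^ 2 * h ^ 2 := by field_simp
    linarith
  refine ⟨partA, ?_⟩
  intro h hEq
  have hh : 0 < h := by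
    rw [hEq]
    have := Real.rpow_pos_of_pos (show (0:ℝ) < 8 by norm_num) ((1:ℝ)/4)
    have := Real.rpow_pos_of_pos hς ((1:ℝ)/2)
    have := Real.rpow_pos_of_pos hμ (-(1:ℝ)/2)
    have := Real.rpow_pos_of_pos hN' (-(1:ℝ)/4)
    positivity
  refine (partA h hh).trans ?_
  have sqpow : ∀ (a : ℝ), 0 ≤ a → ∀ r : ℝ, (a ^ r) ^ 2 = a ^ (2 * r) := by
    intro a ha r
    rw [← Real.rpow_natCast (a ^ r) 2, ← Real.rpow_mul ha]
    norm_num [mul_comm]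
  have s8 : Real.sqrt 8 = 2 * Real.sqrt 2 := by
    rw [show (8:ℝ) = 2 ^ 2 * 2 by norm_num, Real.sqrt_mul (by positivity), Real.sqrt_sq (by norm_num)]
  have hh2 : h ^ 2 = 2 * Real.sqrt 2 * ς * μ⁻¹ * (Real.sqrt N)⁻¹ := by
    rw [hEq, mul_pow, mul_pow, mul_pow, sqpow 8 (by norm_num), sqpow ς hς.le,
      sqpow μ hμ.le, sqpow (N:ℝ) hN'.le]
    norm_num
    rw [Real.rpow_neg_one, Real.rpow_neg hN'.le, ← Real.sqrt_eq_rpow, ← Real.sqrt_eq_rpow, s8]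
  have hμς : (0:ℝ) ≤ μ * ς := by positivity
  have hsN : (0:ℝ) < Real.sqrt N := Real.sqrt_pos.mpr hN'
  have hsN2 : (Real.sqrt N) ^ 2 = (N:ℝ) := Real.sq_sqrt hN'.le
  have hs2 : (Real.sqrt 2) ^ 2 = 2 := Real.sq_sqrt (by norm_num)
  have hs2p : (0:ℝ) < Real.sqrt 2 := Real.sqrt_pos.mpr (by norm_num)
  have hRHS : (1/4) * μ^2 * h^2 + 2*ς^2/(h^2*(N:ℝ))
      = ((2:ℝ)^((1:ℝ)/4) * Real.sqrt (μ*ς) * (N:ℝ)^(-(1:ℝ)/4))^2 := by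
    rw [mul_pow, mul_pow, sqpow 2 (by norm_num), sqpow (N:ℝ) hN'.le, Real.sq_sqrt hμς]
    norm_num
    rw [Real.rpow_neg hN'.le, ← Real.sqrt_eq_rpow, ← Real.sqrt_eq_rpow, hh2, ← hsN2]
    field_simp
    linear_combination (-2*(Real.sqrt N)^2) * hs2 + 4 * (Real.sq_sqrt (sq_nonneg (Real.sqrt N)))
  rw [hRHS, Real.sqrt_sq (by positivity)]
end
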